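/- Suppose (x,U) ∼_0 (y,V), i.e., closure(U·x) = closure(V·y). Then for every ordinal α > 0, (x,U) ∼_α (y,V) if and only if player II has a winning strategy in the game G^s(x,U,y,V,α). -/

import Mathlib

noncomputable section

variable {G X : Type*} [TopologicalSpace G] [Group G] [IsTopologicalGroup G]
  [TopologicalSpace X] [MulAction G X] [ContinuousSMul G X]

/-- The closure of the partial orbit `U · x`. -/
def orbCl (U : Set G) (x : X) : Set X :=
  closure ((fun g : G => g • x) '' U)

/-- Hjorth's ordinal-indexed asymmetric relations `(x,U) ≤_α (y,V)`:
`≤₀` is inclusion of orbit closures; `(x,U) ≤_{α+1} (y,V)` iff for every nonempty open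
`U' ⊆ U` there is a nonempty open `V' ⊆ V` with `(y,V') ≤_α (x,U')`; limits are
conjunctions. -/
def hle (α : Ordinal) : X → Set G → X → Set G → Prop :=
  Ordinal.limitRecOn (motive := fun _ => X → Set G → X → Set G → Prop) α
    (fun x U y V => orbCl U x ⊆ orbCl V y)
    (fun _ ih x U y V =>
      ∀ U' : Set G, IsOpen U' → U'.Nonempty → U' ⊆ U →
        ∃ V' : Set G, IsOpen V' ∧ V'.Nonempty ∧ V' ⊆ V ∧ ih y V' x U')
    (fun _ _ ih x U y V => ∀ β hβ, ih β hβ x U y V)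
/-- The symmetric relations `(x,U) ∼_α (y,V)`: `∼₀` is equality of orbit closures;
`∼_{α+1}` requires `∼_α` together with the two back-and-forth conditions; limits are
conjunctions. -/
def hsim (α : Ordinal) : X → Set G → X → Set G → Prop :=
  Ordinal.limitRecOn (motive := fun _ => X → Set G → X → Set G → Prop) α
    (fun x U y V => orbCl U x = orbCl V y)
    (fun _ ih x U y V =>
      ih x U y V ∧
      (∀ U' : Set G, IsOpen U' → U'.Nonempty → U' ⊆ U →
        ∃ V' : Set G, IsOpen V' ∧ V'.Nonempty ∧ V' ⊆ V ∧ ih y V' x U') ∧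
      (∀ V' : Set G, IsOpen V' → V'.Nonempty → V' ⊆ V →
        ∃ U' : Set G, IsOpen U' ∧ U'.Nonempty ∧ U' ⊆ U ∧ ih x U' y V'))
    (fun _ _ ih x U y V => ∀ β hβ, ih β hβ x U y V)

/-- The state of the game `𝒢ˢ(x,U,y,V,α)` before a round: `z` records the side
(`true` for `x`, `false` for `y`) of the previous round (`z₋₁ = x`), `A` and `B`
the previous open sets `A_{i-1}`, `B_{i-1}`, and `o` the previous ordinal `α_{i-1}`. -/
structure SState (G : Type*) where
  z : Bool
  A : Set G
  B : Set G
  o : Ordinal.{u_2}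

/-- A move of player I in `𝒢ˢ`: a triple `(zᵢ, Aᵢ, αᵢ)`. -/
abbrev SMove (G : Type*) := Bool × Set G × Ordinal

/-- Interpretation of the side marker: `true ↦ x`, `false ↦ y`. -/
def pt (x y : X) (b : Bool) : X := if b then x else y

/-- Legality of player I's move `(zᵢ, Aᵢ, αᵢ)` at state `s`. -/
def slegalI (s : SState G) (m : SMove G) : Prop :=
  m.2.2 < s.o ∧ IsOpen m.2.1 ∧ m.2.1.Nonempty ∧
    (if m.1 = s.z then m.2.1 ⊆ s.A else m.2.1 ⊆ s.B)

/-- Legality of player II's response `B'` to the move `m` at state `s`. -/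
def slegalII (x y : X) (s : SState G) (m : SMove G) (B' : Set G) : Prop :=
  IsOpen B' ∧ B'.Nonempty ∧
    (if m.1 = s.z then B' ⊆ s.B else B' ⊆ s.A) ∧
    orbCl B' (pt x y (!m.1)) = orbCl m.2.1 (pt x y m.1)

/-- The state after a round. -/
def sStep (s : SState G) (m : SMove G) (B' : Set G) : SState G :=
  ⟨m.1, m.2.1, B', m.2.2⟩

/-- The state reached after player I has played the (newest-first) history `h`
and player II has followed the strategy `σ`. -/
def sStateAfter (U V : Set G) (α : Ordinal) (σ : List (SMove G) → Set G) :
    List (SMove G) → SState G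
  | [] => ⟨true, U, V, α⟩
  | m :: h => sStep (sStateAfter U V α σ h) m (σ (m :: h))

/-- All of player I's moves in the (newest-first) history were legal. -/
def sLegalHist (U V : Set G) (α : Ordinal) (σ : List (SMove G) → Set G) :
    List (SMove G) → Prop
  | [] => True
  | m :: h => sLegalHist U V α σ h ∧ slegalI (sStateAfter U V α σ h) m

/-- `σ` is a winning strategy for player II in `𝒢ˢ(x,U,y,V,α)`: against any legal
play of player I, every response of `σ` is legal (the game terminates with player I
unable to move, since the ordinals strictly decrease). -/
def sWinning (x y : X) (U V : Set G) (α : Ordinal)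
    (σ : List (SMove G) → Set G) : Prop :=
  ∀ (m : SMove G) (h : List (SMove G)), sLegalHist U V α σ (m :: h) →
    slegalII x y (sStateAfter U V α σ h) m (σ (m :: h))

/-! ### Basic lemmas about `hsim` -/

theorem hsim_zero (x : X) (U : Set G) (y : X) (V : Set G) :
    hsim 0 x U y V ↔ orbCl U x = orbCl V y := by
  rw [hsim, Ordinal.limitRecOn_zero]

theorem hsim_succ (β : Ordinal) (x : X) (U : Set G) (y : X) (V : Set G) :
    hsim (Order.succ β) x U y V ↔
      (hsim β x U y V ∧
      (∀ U' : Set G, IsOpen U' → U'.Nonempty → U' ⊆ U →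
        ∃ V' : Set G, IsOpen V' ∧ V'.Nonempty ∧ V' ⊆ V ∧ hsim β y V' x U') ∧
      (∀ V' : Set G, IsOpen V' → V'.Nonempty → V' ⊆ V →
        ∃ U' : Set G, IsOpen U' ∧ U'.Nonempty ∧ U' ⊆ U ∧ hsim β x U' y V')) := by
  rw [hsim, Ordinal.limitRecOn_succ]; rfl

theorem hsim_limit {α : Ordinal} (hl : Order.IsSuccLimit α) (x : X) (U : Set G) (y : X) (V : Set G) :
    hsim α x U y V ↔ ∀ β < α, hsim β x U y V := by
  rw [hsim, Ordinal.limitRecOn_limit _ _ _ _ hl]; rfl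

theorem hsim_symm : ∀ α : Ordinal, ∀ (x : X) (U : Set G) (y : X) (V : Set G),
    hsim α x U y V → hsim α y V x U := by
  intro α
  induction α using Ordinal.induction with
  | _ α IH =>
  intro x U y V h
  rcases Ordinal.zero_or_succ_or_isSuccLimit α with rfl | ⟨β, rfl⟩ | hl
  · rw [hsim_zero] at h ⊢; exact h.symm
  · rw [hsim_succ] at h ⊢
    exact ⟨IH β (Order.lt_succ β) _ _ _ _ h.1, h.2.2, h.2.1⟩
  · rw [hsim_limit hl] at h ⊢
    exact fun β hβ => IH β hβ _ _ _ _ (h β hβ)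

theorem hsim_mono : ∀ α : Ordinal, ∀ β ≤ α, ∀ (x : X) (U : Set G) (y : X) (V : Set G),
    hsim α x U y V → hsim β x U y V := by
  intro α
  induction α using Ordinal.induction with
  | _ α IH =>
  intro β hβ x U y V h
  rcases eq_or_lt_of_le hβ with rfl | hlt
  · exact h
  rcases Ordinal.zero_or_succ_or_isSuccLimit α with rfl | ⟨γ, rfl⟩ | hl
  · exact absurd hlt (by simp)
  · rw [hsim_succ] at h
    exact IH γ (Order.lt_succ γ) β (Order.lt_succ_iff.mp hlt) x U y V h.1
  · rw [hsim_limit hl] at h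
    exact h β hlt

theorem hsim_orbCl {α : Ordinal} {x : X} {U : Set G} {y : X} {V : Set G}
    (h : hsim α x U y V) : orbCl U x = orbCl V y :=
  (hsim_zero x U y V).mp (hsim_mono α 0 zero_le x U y V h)
/-! ### Forward direction: from `hsim` to a winning strategy -/

/-- Invariant maintained by player II's strategy. -/
def HInv (x y : X) (s : SState G) : Prop :=
  IsOpen s.A ∧ s.A.Nonempty ∧ IsOpen s.B ∧ s.B.Nonempty ∧
    hsim s.o (pt x y s.z) s.A (pt x y (!s.z)) s.B

theorem step_exists {x y : X} {s : SState G} {m : SMove G}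
    (hs : HInv x y s) (hm : slegalI s m) :
    ∃ B' : Set G, IsOpen B' ∧ B'.Nonempty ∧
      (if m.1 = s.z then B' ⊆ s.B else B' ⊆ s.A) ∧
      hsim m.2.2 (pt x y m.1) m.2.1 (pt x y (!m.1)) B' := by
  obtain ⟨hAop, hAne, hBop, hBne, hsim₀⟩ := hs
  obtain ⟨hlt, hop, hne, hsub⟩ := hm
  by_cases hz : m.1 = s.z
  · rw [if_pos hz] at hsub
    have hsucc : hsim (Order.succ m.2.2) (pt x y s.z) s.A (pt x y (!s.z)) s.B :=
      hsim_mono s.o _ (Order.succ_le_of_lt hlt) _ _ _ _ hsim₀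
    obtain ⟨V', hV'op, hV'ne, hV'sub, hh⟩ :=
      ((hsim_succ _ _ _ _ _).mp hsucc).2.1 m.2.1 hop hne hsub
    refine ⟨V', hV'op, hV'ne, by rw [if_pos hz]; exact hV'sub, ?_⟩
    rw [hz]
    exact hsim_symm _ _ _ _ _ hh
  · rw [if_neg hz] at hsub
    have hz' : m.1 = !s.z := by
      cases hb : m.1 <;> cases hbz : s.z <;> simp_all
    have hsucc : hsim (Order.succ m.2.2) (pt x y (!s.z)) s.B (pt x y s.z) s.A :=
      hsim_mono s.o _ (Order.succ_le_of_lt hlt) _ _ _ _ (hsim_symm _ _ _ _ _ hsim₀)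
    obtain ⟨V', hV'op, hV'ne, hV'sub, hh⟩ :=
      ((hsim_succ _ _ _ _ _).mp hsucc).2.1 m.2.1 hop hne hsub
    refine ⟨V', hV'op, hV'ne, by rw [if_neg hz]; exact hV'sub, ?_⟩
    rw [hz', Bool.not_not]
    exact hsim_symm _ _ _ _ _ hh

open Classical in
/-- Player II's response function. -/
def resp (x y : X) (s : SState G) (m : SMove G) : Set G :=
  if h : HInv x y s ∧ slegalI s m then (step_exists h.1 h.2).choose else ∅

theorem resp_spec {x y : X} {s : SState G} {m : SMove G}
    (hs : HInv x y s) (hm : slegalI s m) :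
    IsOpen (resp x y s m) ∧ (resp x y s m).Nonempty ∧
      (if m.1 = s.z then resp x y s m ⊆ s.B else resp x y s m ⊆ s.A) ∧
      hsim m.2.2 (pt x y m.1) m.2.1 (pt x y (!m.1)) (resp x y s m) := by
  have hc : HInv x y s ∧ slegalI s m := ⟨hs, hm⟩
  rw [resp, dif_pos hc]
  exact (step_exists hc.1 hc.2).choose_spec

/-- The states produced by player II's canonical strategy. -/
def play (x y : X) (U V : Set G) (α : Ordinal) : List (SMove G) → SState G
  | [] => ⟨true, U, V, α⟩
  | m :: h => sStep (play x y U V α h) m (resp x y (play x y U V α h) m)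

/-- Player II's canonical strategy. -/
def strat (x y : X) (U V : Set G) (α : Ordinal) : List (SMove G) → Set G
  | [] => ∅
  | m :: h => resp x y (play x y U V α h) m

theorem sStateAfter_strat (x y : X) (U V : Set G) (α : Ordinal) :
    ∀ h : List (SMove G), sStateAfter U V α (strat x y U V α) h = play x y U V α h := by
  intro h
  induction h with
  | nil => rfl
  | cons m t ih => rw [sStateAfter, play, strat, ih]

theorem play_inv {x y : X} {U V : Set G} {α : Ordinal}
    (hU : IsOpen U) (hUne : U.Nonempty) (hV : IsOpen V) (hVne : V.Nonempty)
    (hs : hsim α x U y V) :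
    ∀ h : List (SMove G), sLegalHist U V α (strat x y U V α) h →
      HInv x y (play x y U V α h) := by
  intro h
  induction h with
  | nil => intro _; exact ⟨hU, hUne, hV, hVne, by simpa [pt, play] using hs⟩
  | cons m t ih =>
    rintro ⟨ht, hm⟩
    rw [sStateAfter_strat] at hm
    have hinv := ih ht
    obtain ⟨hop, hne, hsub, hh⟩ := resp_spec hinv hm
    obtain ⟨_, hmop, hmne, _⟩ := hm
    exact ⟨hmop, hmne, hop, hne, hh⟩

theorem strat_winning {x y : X} {U V : Set G} {α : Ordinal}
    (hU : IsOpen U) (hUne : U.Nonempty) (hV : IsOpen V) (hVne : V.Nonempty)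
    (hs : hsim α x U y V) :
    sWinning x y U V α (strat x y U V α) := by
  rintro m h ⟨ht, hm⟩
  rw [sStateAfter_strat] at hm ⊢
  have hinv := play_inv hU hUne hV hVne hs h ht
  obtain ⟨hop, hne, hsub, hh⟩ := resp_spec hinv hm
  rw [strat]
  exact ⟨hop, hne, hsub, (hsim_orbCl hh).symm⟩
/-! ### Game lemmas -/

theorem sStateAfter_cons (U V : Set G) (α : Ordinal) (σ : List (SMove G) → Set G)
    (m : SMove G) (h : List (SMove G)) :
    sStateAfter U V α σ (m :: h) = ⟨m.1, m.2.1, σ (m :: h), m.2.2⟩ := rfl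

theorem sLegalHist_mono {U V : Set G} {β α : Ordinal} (hβα : β ≤ α)
    (σ : List (SMove G) → Set G) :
    ∀ h, sLegalHist U V β σ h → sLegalHist U V α σ h := by
  intro h
  induction h with
  | nil => exact fun h => h
  | cons m t ih =>
    rintro ⟨ht, hm⟩
    refine ⟨ih ht, ?_⟩
    cases t with
    | nil => exact ⟨lt_of_lt_of_le hm.1 hβα, hm.2⟩
    | cons m' t' => exact hm

theorem sWinning_mono {x y : X} {U V : Set G} {β α : Ordinal} (hβα : β ≤ α)
    {σ : List (SMove G) → Set G} (hw : sWinning x y U V α σ) :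
    sWinning x y U V β σ := by
  intro m h hleg
  have H := hw m h (sLegalHist_mono hβα σ (m :: h) hleg)
  cases h with
  | nil => exact H
  | cons m' t' => exact H

theorem sStateAfter_residual {U V : Set G} {α : Ordinal} (σ : List (SMove G) → Set G)
    {m : SMove G} (hm1 : m.1 = true) :
    ∀ h, sStateAfter m.2.1 (σ [m]) m.2.2 (fun h' => σ (h' ++ [m])) h =
      sStateAfter U V α σ (h ++ [m]) := by
  intro h
  induction h with
  | nil => simp [sStateAfter, sStep, hm1]
  | cons m' t ih => rfl

theorem sLegalHist_residual {U V : Set G} {α : Ordinal} {σ : List (SMove G) → Set G}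
    {m : SMove G} (hm1 : m.1 = true) (hm : slegalI (⟨true, U, V, α⟩ : SState G) m) :
    ∀ h, sLegalHist m.2.1 (σ [m]) m.2.2 (fun h' => σ (h' ++ [m])) h →
      sLegalHist U V α σ (h ++ [m]) := by
  intro h
  induction h with
  | nil => exact fun _ => ⟨trivial, hm⟩
  | cons m' t ih =>
    rintro ⟨ht, hm'⟩
    rw [sStateAfter_residual (U := U) (V := V) (α := α) σ hm1 t] at hm'
    exact ⟨ih ht, hm'⟩

theorem sWinning_residual {x y : X} {U V : Set G} {α : Ordinal}
    {σ : List (SMove G) → Set G} (hw : sWinning x y U V α σ)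
    {m : SMove G} (hm1 : m.1 = true) (hm : slegalI (⟨true, U, V, α⟩ : SState G) m) :
    sWinning x y m.2.1 (σ [m]) m.2.2 (fun h' => σ (h' ++ [m])) := by
  intro m' h hleg
  have H := hw m' (h ++ [m]) (sLegalHist_residual hm1 hm (m' :: h) hleg)
  rw [sStateAfter_residual (U := U) (V := V) (α := α) σ hm1 h]
  exact H

/-- Flipping the side marker of a move. -/
def flipM (m : SMove G) : SMove G := (!m.1, m.2)

theorem slegalI_flip_root {U V : Set G} {o : Ordinal} {m : SMove G}
    (h : slegalI (⟨true, V, U, o⟩ : SState G) m) :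
    slegalI (⟨true, U, V, o⟩ : SState G) (flipM m) := by
  obtain ⟨b, A₀, o₀⟩ := m
  obtain ⟨h1, h2, h3, h4⟩ := h
  cases b <;> simp_all [slegalI, flipM]

theorem slegalI_flip_cons {A B : Set G} {o : Ordinal} {z : Bool} {m : SMove G}
    (h : slegalI (⟨z, A, B, o⟩ : SState G) m) :
    slegalI (⟨!z, A, B, o⟩ : SState G) (flipM m) := by
  obtain ⟨b, A₀, o₀⟩ := m
  obtain ⟨h1, h2, h3, h4⟩ := h
  cases b <;> cases z <;> simp_all [slegalI, flipM]

theorem slegalII_flip_root {x y : X} {U V B' : Set G} {o : Ordinal} {m : SMove G}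
    (h : slegalII x y (⟨true, U, V, o⟩ : SState G) (flipM m) B') :
    slegalII y x (⟨true, V, U, o⟩ : SState G) m B' := by
  obtain ⟨b, A₀, o₀⟩ := m
  obtain ⟨h1, h2, h3, h4⟩ := h
  cases b <;> simp_all [slegalII, flipM, pt]

theorem slegalII_flip_cons {x y : X} {A B B' : Set G} {o : Ordinal} {z : Bool} {m : SMove G}
    (h : slegalII x y (⟨!z, A, B, o⟩ : SState G) (flipM m) B') :
    slegalII y x (⟨z, A, B, o⟩ : SState G) m B' := by
  obtain ⟨b, A₀, o₀⟩ := m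
  obtain ⟨h1, h2, h3, h4⟩ := h
  cases b <;> cases z <;> simp_all [slegalII, flipM, pt]

theorem sLegalHist_flip {U V : Set G} {α : Ordinal} {σ : List (SMove G) → Set G} :
    ∀ h, sLegalHist V U α (fun h' => σ (h'.map flipM)) h →
      sLegalHist U V α σ (h.map flipM) := by
  intro h
  induction h with
  | nil => exact fun _ => trivial
  | cons m t ih =>
    rintro ⟨ht, hm⟩
    refine ⟨ih ht, ?_⟩
    cases t with
    | nil => exact slegalI_flip_root hm
    | cons m' t' => exact slegalI_flip_cons hm

theorem sWinning_flip {x y : X} {U V : Set G} {α : Ordinal}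
    {σ : List (SMove G) → Set G} (hw : sWinning x y U V α σ) :
    sWinning y x V U α (fun h' => σ (h'.map flipM)) := by
  intro m h hleg
  have H := hw (flipM m) (h.map flipM) (sLegalHist_flip (m :: h) hleg)
  cases h with
  | nil => exact slegalII_flip_root H
  | cons m' t' => exact slegalII_flip_cons H
/-! ### Backward direction -/

theorem winning_to_hsim : ∀ α : Ordinal, ∀ (x y : X) (U V : Set G),
    orbCl U x = orbCl V y → (∃ σ, sWinning x y U V α σ) → hsim α x U y V := by
  intro α
  induction α using Ordinal.induction with
  | _ α IH =>
  rintro x y U V h0 ⟨σ, hσ⟩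
  rcases Ordinal.zero_or_succ_or_isSuccLimit α with rfl | ⟨β, rfl⟩ | hl
  · exact (hsim_zero x U y V).mpr h0
  · rw [hsim_succ]
    refine ⟨IH β (Order.lt_succ β) x y U V h0
      ⟨σ, sWinning_mono (Order.le_succ β) hσ⟩, ?_, ?_⟩
    · -- forward clause
      intro U' hop hne hsub
      set m : SMove G := (true, U', β) with hm_def
      have hmleg : slegalI (⟨true, U, V, Order.succ β⟩ : SState G) m :=
        ⟨Order.lt_succ β, hop, hne, by simp [hm_def, hsub]⟩
      have hII := hσ m [] ⟨trivial, hmleg⟩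
      obtain ⟨hBop, hBne, hBsub, hBeq⟩ := hII
      refine ⟨σ [m], hBop, hBne, by simpa [sStateAfter, hm_def] using hBsub, ?_⟩
      have hres := sWinning_residual hσ (m := m) rfl hmleg
      have h0' : orbCl U' x = orbCl (σ [m]) y := by simpa [pt, hm_def] using hBeq.symm
      exact hsim_symm β x U' y (σ [m])
        (IH β (Order.lt_succ β) x y U' (σ [m]) h0' ⟨_, hres⟩)
    · -- backward clause
      intro V' hop hne hsub
      have hflip := sWinning_flip hσ
      set σ' : List (SMove G) → Set G := fun h' => σ (h'.map flipM) with hσ'_def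
      set m : SMove G := (true, V', β) with hm_def
      have hmleg : slegalI (⟨true, V, U, Order.succ β⟩ : SState G) m :=
        ⟨Order.lt_succ β, hop, hne, by simp [hm_def, hsub]⟩
      have hII := hflip m [] ⟨trivial, hmleg⟩
      obtain ⟨hBop, hBne, hBsub, hBeq⟩ := hII
      refine ⟨σ' [m], hBop, hBne, by simpa [sStateAfter, hm_def] using hBsub, ?_⟩
      have hres := sWinning_residual hflip (m := m) rfl hmleg
      have h0' : orbCl V' y = orbCl (σ' [m]) x := by simpa [pt, hm_def] using hBeq.symm
      exact hsim_symm β y V' x (σ' [m])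
        (IH β (Order.lt_succ β) y x V' (σ' [m]) h0' ⟨_, hres⟩)
  · rw [hsim_limit hl]
    exact fun β hβ => IH β hβ x y U V h0 ⟨σ, sWinning_mono hβ.le hσ⟩

/-- Suppose `(x,U) ∼₀ (y,V)`. Then for every ordinal `α > 0`, `(x,U) ∼_α (y,V)`
iff player II has a winning strategy in `𝒢ˢ(x,U,y,V,α)`. -/
theorem hsim_iff_sWinning (x y : X) (U V : Set G)
    (hU : IsOpen U) (hUne : U.Nonempty) (hV : IsOpen V) (hVne : V.Nonempty)
    (h0 : orbCl U x = orbCl V y) (α : Ordinal) (hα : 0 < α) :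
    hsim α x U y V ↔ ∃ σ : List (SMove G) → Set G, sWinning x y U V α σ := by
  constructor
  · intro h
    exact ⟨strat x y U V α, strat_winning hU hUne hV hVne h⟩
  · exact winning_to_hsim α x y U V h0

end
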